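/- Suppose X and Y are injective metric spaces, A ⊆ X is a set that spans X, and B ⊆ Y is a set that spans Y. Then d_GH(X, Y) ≤ 2 · d_GH(A, B), where d_GH denotes the Gromov–Hausdorff distance. -/

import Mathlib

open Metric Set
open scoped ENNReal

/-- `A` spans `X`: for all `x x'`, `d(x,x') = sup_{a ∈ A} (d(x,a) − d(x',a))`. -/
def Spans {X : Type} [MetricSpace X] (A : Set X) : Prop :=
  ∀ x x' : X, IsLUB ((fun a => dist x a - dist x' a) '' A) (dist x x')

/-- A metric space `Y` is injective: for every metric space `B`, every subset `A ⊆ B`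
and every 1-Lipschitz map `f : A → Y` there is a 1-Lipschitz map `g : B → Y`
extending `f`. -/
def IsInjectiveMS (Y : Type) [MetricSpace Y] : Prop :=
  ∀ (B : Type) [MetricSpace B] (A : Set B) (f : A → Y),
    LipschitzWith 1 f → ∃ g : B → Y, LipschitzWith 1 g ∧ ∀ a : A, g a = f a

/-- A realization of (isometric copies of) `X` and `Y` inside a common metric space `Z`
with Hausdorff distance `< ρ`. -/
structure GHRealization (X Y : Type) [MetricSpace X] [MetricSpace Y] (ρ : ℝ≥0∞) :
    Type 1 where
  Z : Type
  [mZ : MetricSpace Z]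
  X' : Set Z
  Y' : Set Z
  isomX : Nonempty (X ≃ᵢ X')
  isomY : Nonempty (Y ≃ᵢ Y')
  hausdorff_lt : EMetric.hausdorffEdist X' Y' < ρ

/-- The Gromov–Hausdorff distance: the infimum of all `ρ > 0` such that `X` and `Y`
admit isometric copies in a common metric space at Hausdorff distance `< ρ`. -/
noncomputable def ghDist (X Y : Type) [MetricSpace X] [MetricSpace Y] : ℝ≥0∞ :=
  ⨅ (ρ : ℝ≥0∞) (_ : 0 < ρ ∧ Nonempty (GHRealization X Y ρ)), ρ

/-! ### Auxiliary lemmas -/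

section Aux

lemma ghDist_le_of_realization {X Y : Type} [MetricSpace X] [MetricSpace Y] {ρ : ℝ≥0∞}
    (h1 : 0 < ρ) (h2 : Nonempty (GHRealization X Y ρ)) : ghDist X Y ≤ ρ :=
  iInf₂_le ρ ⟨h1, h2⟩

lemma spans_isEmpty {X : Type} [MetricSpace X] {A : Set X} (hA : Spans A)
    (h : IsEmpty ↥A) : IsEmpty X := by
  constructor
  intro x
  have hA0 : A = ∅ := Set.isEmpty_coe_sort.mp h
  have hub : (-1 : ℝ) ∈ upperBounds ((fun a => dist x a - dist x a) '' A) := by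
    intro z hz
    rw [hA0, Set.image_empty] at hz
    exact absurd hz (Set.notMem_empty z)
  have := (hA x x).2 hub
  rw [dist_self] at this
  linarith

lemma spans_nonempty {X : Type} [MetricSpace X] {A : Set X} (hA : Spans A)
    [hX : Nonempty X] : Nonempty ↥A := by
  by_contra h
  rw [not_nonempty_iff] at h
  exact (spans_isEmpty hA h).false (Classical.arbitrary X)

/-- The trivial realization of two empty spaces. -/
lemma ghRealization_of_isEmpty {X Y : Type} [MetricSpace X] [MetricSpace Y]
    [IsEmpty X] [IsEmpty Y] {ρ : ℝ≥0∞} (hρ : 0 < ρ) : Nonempty (GHRealization X Y ρ) := by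
  haveI : IsEmpty ↥(∅ : Set PUnit.{1}) := Set.isEmpty_coe_sort.mpr rfl
  refine ⟨{ Z := PUnit, X' := (∅ : Set PUnit), Y' := (∅ : Set PUnit),
            isomX := ⟨⟨Equiv.equivOfIsEmpty _ _, fun a => isEmptyElim a⟩⟩,
            isomY := ⟨⟨Equiv.equivOfIsEmpty _ _, fun a => isEmptyElim a⟩⟩,
            hausdorff_lt := ?_ }⟩
  rw [EMetric.hausdorffEdist, EMetric.hausdorffEdist_self]
  exact hρ

end Aux
/-! ### A point realizing a consistent family of ball constraints, via injectivity -/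

/-- Type synonym: `Y` with one extra point. -/
def Aug (Y : Type) : Type := Option Y

/-- The extra point of `Aug Y`. -/
def Aug.pt {Y : Type} : Aug Y := Option.none

/-- The inclusion `Y → Aug Y`. -/
def Aug.of {Y : Type} (y : Y) : Aug Y := Option.some y

/-- Distance for `Aug Y` given the distance `e` from the extra point. -/
noncomputable def augDist {Y : Type} [MetricSpace Y] (e : Y → ℝ) :
    Option Y → Option Y → ℝ
  | Option.some y, Option.some y' => dist y y'
  | Option.some y, Option.none => e y
  | Option.none, Option.some y => e y
  | Option.none, Option.none => 0

section AugLemmas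
variable {Y : Type} [MetricSpace Y] {e : Y → ℝ}

lemma augDist_self (e : Y → ℝ) : ∀ p : Option Y, augDist e p p = 0 := by
  rintro (_ | y) <;> simp [augDist]

lemma augDist_comm (e : Y → ℝ) : ∀ p q : Option Y, augDist e p q = augDist e q p := by
  rintro (_ | y) (_ | y') <;> simp [augDist, dist_comm]

lemma augDist_triangle (hpair : ∀ y y' : Y, dist y y' ≤ e y + e y')
    (hlip : ∀ y y' : Y, e y ≤ e y' + dist y' y) (he0 : ∀ y, 0 ≤ e y) :
    ∀ p q r : Option Y, augDist e p r ≤ augDist e p q + augDist e q r := by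
  rintro (_ | y) (_ | y') (_ | y'') <;> simp only [augDist]
  · norm_num
  · linarith [he0 y'']
  · linarith [he0 y']
  · exact hlip y'' y'
  · linarith [he0 y]
  · exact hpair y y''
  · linarith [hlip y y', dist_comm y' y]
  · exact dist_triangle y y' y''

lemma augDist_eq_zero {εe : ℝ} (hε : 0 < εe) (he : ∀ y, εe ≤ e y) :
    ∀ p q : Option Y, augDist e p q = 0 → p = q := by
  rintro (_ | y) (_ | y') h <;> simp only [augDist] at h
  · rfl
  · exact absurd h (by have := he y'; linarith : (0:ℝ) < e y').ne'
  · exact absurd h (by have := he y; linarith : (0:ℝ) < e y).ne'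
  · rw [eq_of_dist_eq_zero h]

end AugLemmas

/-- Given radii `f` on a subset `B` of an injective space `Y` that are pairwise
consistent, there is a point `y` within `f b + ε` of each `b`. -/
lemma exists_point_of_radii {Y : Type} [MetricSpace Y] (hY : IsInjectiveMS Y)
    {B : Set Y} [hne : Nonempty ↥B] (f : ↥B → ℝ) (ε : ℝ) (hε : 0 < ε)
    (hf0 : ∀ b, 0 ≤ f b)
    (hpair : ∀ b b' : ↥B, dist (b : Y) (b' : Y) ≤ f b + f b') :
    ∃ y : Y, ∀ b : ↥B, dist y (b : Y) ≤ f b + ε := by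
  classical
  set e : Y → ℝ := fun y => ⨅ b : ↥B, (f b + ε + dist (b : Y) y) with he
  have hbd : ∀ y : Y, BddBelow (Set.range fun b : ↥B => f b + ε + dist (b : Y) y) := by
    intro y
    refine ⟨0, ?_⟩
    rintro _ ⟨b, rfl⟩
    have h1 := hf0 b
    have h2 : (0:ℝ) ≤ dist (b : Y) y := dist_nonneg
    simp only
    linarith
  have e_le : ∀ (y : Y) (b : ↥B), e y ≤ f b + ε + dist (b : Y) y := fun y b =>
    ciInf_le (hbd y) b
  have e_ge : ∀ y : Y, ε ≤ e y := by
    intro y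
    refine le_ciInf fun b => ?_
    have h1 := hf0 b
    have h2 : (0:ℝ) ≤ dist (b : Y) y := dist_nonneg
    linarith
  have e_ge0 : ∀ y : Y, 0 ≤ e y := fun y => le_trans hε.le (e_ge y)
  have e_lip : ∀ y y' : Y, e y ≤ e y' + dist y' y := by
    intro y y'
    have h : e y - dist y' y ≤ e y' := by
      refine le_ciInf fun b => ?_
      have h1 := e_le y b
      have h2 := dist_triangle (b : Y) y' y
      linarith
    linarith
  have e_pair : ∀ y y' : Y, dist y y' ≤ e y + e y' := by
    intro y y'
    have h : dist y y' - e y' ≤ e y := by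
      refine le_ciInf fun b => ?_
      have h' : dist y y' - (f b + ε + dist (b : Y) y) ≤ e y' := by
        refine le_ciInf fun b' => ?_
        have h1 := hpair b b'
        have h2 := dist_triangle y (b : Y) y'
        have h3 := dist_triangle (b : Y) (b' : Y) y'
        have h4 := dist_comm (b : Y) y
        linarith
      linarith
    linarith
  letI M : MetricSpace (Aug Y) :=
    { dist := fun p q => augDist e p q
      dist_self := augDist_self e
      dist_comm := augDist_comm e
      dist_triangle := augDist_triangle e_pair e_lip e_ge0
      eq_of_dist_eq_zero := fun {p q} h => augDist_eq_zero hε e_ge p q h }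
  obtain ⟨b₀⟩ := hne
  set S : Set (Aug Y) := Set.range (Aug.of : Y → Aug Y) with hS
  set f₀ : ↥S → Y := fun s => Option.getD (s.1 : Option Y) (b₀ : Y) with hf₀
  have hf₀eq : ∀ (s : ↥S) (y : Y), Aug.of y = ↑s → f₀ s = y := by
    intro s y hy
    simp only [hf₀, ← hy]
    rfl
  have hda : ∀ y y' : Y, dist (Aug.of y) (Aug.of y') = dist y y' := fun _ _ => rfl
  have hdpt : ∀ y : Y, dist (Aug.pt : Aug Y) (Aug.of y) = e y := fun _ => rfl
  have hlip : LipschitzWith 1 f₀ := by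
    refine LipschitzWith.of_dist_le_mul fun s s' => ?_
    obtain ⟨y, hy⟩ := s.2
    obtain ⟨y', hy'⟩ := s'.2
    have h1 : dist s s' = dist (s.1 : Aug Y) (s'.1 : Aug Y) := rfl
    rw [NNReal.coe_one, one_mul, h1, ← hy, ← hy', hda, hf₀eq s y hy, hf₀eq s' y' hy']
  obtain ⟨g, hg, hgs⟩ := hY (Aug Y) S f₀ hlip
  refine ⟨g Aug.pt, fun b => ?_⟩
  have hmem : Aug.of (b : Y) ∈ S := ⟨(b : Y), rfl⟩
  have h1 : g (Aug.of (b : Y)) = (b : Y) := by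
    have h := hgs ⟨Aug.of (b : Y), hmem⟩
    rwa [hf₀eq ⟨Aug.of (b : Y), hmem⟩ (b : Y) rfl] at h
  have h2 := hg.dist_le_mul (Aug.pt : Aug Y) (Aug.of (b : Y))
  rw [NNReal.coe_one, one_mul, h1, hdpt] at h2
  have h4 := e_le (b : Y) b
  rw [dist_self] at h4
  linarith
/-- Key lemma: given a spanning set `A` of `X`, an injective space `Y` with subset `B`,
and `rr`-close matchings in a common space `W`, every `x : X` admits `y : Y` whose
distances to `B` approximate the distances of `x` to `A` along matched pairs. -/
lemma key_point {X Y W : Type} [MetricSpace X] [MetricSpace Y] [MetricSpace W]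
    (hY : IsInjectiveMS Y) {A : Set X} (hA : Spans A) {B : Set Y}
    [Nonempty ↥A] [Nonempty ↥B]
    (i : ↥A → W) (j : ↥B → W) (hi : Isometry i) (hj : Isometry j)
    (rr ε : ℝ) (hε : 0 < ε)
    (hab : ∀ a : ↥A, ∃ b : ↥B, dist (i a) (j b) < rr)
    (x : X) :
    ∃ y : Y, ∀ (a : ↥A) (b : ↥B), dist (i a) (j b) < rr →
      dist y (b : Y) ≤ dist x (a : X) + (rr + ε) ∧
      dist x (a : X) - (3*rr + ε) ≤ dist y (b : Y) := by
  classical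
  have hiD : ∀ a a' : ↥A, dist (i a) (i a') = dist (a : X) (a' : X) := fun a a' =>
    hi.dist_eq a a'
  have hjD : ∀ b b' : ↥B, dist (j b) (j b') = dist (b : Y) (b' : Y) := fun b b' =>
    hj.dist_eq b b'
  set G : ↥B → ℝ := fun b => ⨅ a : ↥A, (dist x (a : X) + dist (i a) (j b)) with hG
  have hbd : ∀ b : ↥B, BddBelow (Set.range fun a : ↥A => dist x (a : X) + dist (i a) (j b)) := by
    intro b
    refine ⟨0, ?_⟩
    rintro _ ⟨a, rfl⟩
    simp only
    positivity
  have G_le : ∀ (b : ↥B) (a : ↥A), G b ≤ dist x (a : X) + dist (i a) (j b) := fun b a =>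
    ciInf_le (hbd b) a
  have G_nonneg : ∀ b, 0 ≤ G b := by
    intro b
    refine le_ciInf fun a => ?_
    positivity
  have G_pair : ∀ b b' : ↥B, dist (b : Y) (b' : Y) ≤ G b + G b' := by
    intro b b'
    have h : dist (b : Y) (b' : Y) - G b' ≤ G b := by
      refine le_ciInf fun a => ?_
      have h' : dist (b : Y) (b' : Y) - (dist x (a : X) + dist (i a) (j b)) ≤ G b' := by
        refine le_ciInf fun a' => ?_
        have h1 : dist (j b) (j b') ≤ dist (j b) (i a) + dist (i a) (i a') + dist (i a') (j b') :=
          dist_triangle4 _ _ _ _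
        have h2 := hjD b b'
        have h3 := hiD a a'
        have h4 : dist ((a : X)) ((a' : X)) ≤ dist (a : X) x + dist x (a' : X) :=
          dist_triangle _ _ _
        have h5 := dist_comm (i a) (j b)
        have h6 := dist_comm (a : X) x
        linarith
      linarith
    linarith
  obtain ⟨y, hy⟩ := exists_point_of_radii hY G ε hε G_nonneg G_pair
  refine ⟨y, fun a b hab' => ?_⟩
  constructor
  · have h1 := hy b
    have h2 := G_le b a
    linarith
  · -- lower bound via the spanning property of `A`
    have hub : dist x (a : X) - (3*rr + ε) ≤ dist y (b : Y) := by
      have hlub := hA (a : X) x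
      have hle : dist (a : X) x ≤ dist y (b : Y) + (3*rr + ε) := by
        refine hlub.2 ?_
        rintro z ⟨ael, hael, rfl⟩
        set a' : ↥A := ⟨ael, hael⟩ with ha'
        obtain ⟨b', hb'⟩ := hab a'
        show dist (a : X) ael - dist x ael ≤ dist y (b : Y) + (3*rr + ε)
        have h1 : dist (i a) (i a') ≤ dist (i a) (j b) + dist (j b) (j b') + dist (j b') (i a') :=
          dist_triangle4 _ _ _ _
        have h2 := hiD a a'
        have h3 := hjD b b'
        have h4 : dist (b : Y) (b' : Y) ≤ dist y (b : Y) + dist y (b' : Y) := by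
          have := dist_triangle (b : Y) y (b' : Y)
          have := dist_comm (b : Y) y
          linarith
        have h5 : dist y (b' : Y) ≤ G b' + ε := hy b'
        have h6 : G b' ≤ dist x (a' : X) + dist (i a') (j b') := G_le b' a'
        have h7 := dist_comm (j b') (i a')
        have h8 : dist (a : X) (a' : X) = dist (a : X) ael := rfl
        have h9 : dist x (a' : X) = dist x ael := rfl
        linarith
      have h10 := dist_comm (a : X) x
      linarith
    exact hub
/-! ### Gluing two spaces along a bridge cost function -/

/-- Type synonym for the disjoint union. -/
def Glue (X Y : Type) : Type := X ⊕ Y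

/-- Left inclusion. -/
def Glue.inX {X Y : Type} (x : X) : Glue X Y := Sum.inl x

/-- Right inclusion. -/
def Glue.inY {X Y : Type} (y : Y) : Glue X Y := Sum.inr y

/-- The glued distance. -/
noncomputable def gdist {X Y : Type} [MetricSpace X] [MetricSpace Y] (c : X → Y → ℝ) :
    X ⊕ Y → X ⊕ Y → ℝ
  | Sum.inl x, Sum.inl x' => dist x x'
  | Sum.inl x, Sum.inr y => c x y
  | Sum.inr y, Sum.inl x => c x y
  | Sum.inr y, Sum.inr y' => dist y y'

section GlueLemmas
variable {X Y : Type} [MetricSpace X] [MetricSpace Y] {c : X → Y → ℝ} {half : ℝ}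

lemma gdist_self (c : X → Y → ℝ) : ∀ p : X ⊕ Y, gdist c p p = 0 := by
  rintro (x | y) <;> simp [gdist]

lemma gdist_comm (c : X → Y → ℝ) : ∀ p q : X ⊕ Y, gdist c p q = gdist c q p := by
  rintro (x | y) (x' | y') <;> simp [gdist, dist_comm]

lemma gdist_triangle
    (hlx : ∀ x x' y, c x y ≤ dist x x' + c x' y)
    (hly : ∀ x y y', c x y ≤ c x y' + dist y' y)
    (htX : ∀ x x' y, dist x x' ≤ c x y + c x' y)
    (htY : ∀ x y y', dist y y' ≤ c x y + c x y') :
    ∀ p q r : X ⊕ Y, gdist c p r ≤ gdist c p q + gdist c q r := by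
  rintro (x | y) (x' | y') (x'' | y'') <;> simp only [gdist]
  · exact dist_triangle x x' x''
  · exact hlx x x' y''
  · linarith [htX x x'' y']
  · linarith [hly x y'' y', dist_comm y' y'']
  · linarith [hlx x'' x' y, dist_comm x' x'']
  · exact htY x' y y''
  · linarith [hly x'' y y', dist_comm y' y]
  · exact dist_triangle y y' y''

lemma gdist_eq_zero (hhalf : 0 < half) (hge : ∀ x y, half ≤ c x y) :
    ∀ p q : X ⊕ Y, gdist c p q = 0 → p = q := by
  rintro (x | y) (x' | y') h <;> simp only [gdist] at h
  · rw [eq_of_dist_eq_zero h]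
  · exact absurd h (by have := hge x y'; linarith : (0:ℝ) < c x y').ne'
  · exact absurd h (by have := hge x' y; linarith : (0:ℝ) < c x' y).ne'
  · rw [eq_of_dist_eq_zero h]

end GlueLemmas

/-- From a bridge cost function with the right properties, we get a GH realization. -/
lemma realization_of_bridge {X Y : Type} [MetricSpace X] [MetricSpace Y]
    (c : X → Y → ℝ) (half : ℝ) (hhalf : 0 < half)
    (hge : ∀ x y, half ≤ c x y)
    (hlx : ∀ x x' y, c x y ≤ dist x x' + c x' y)
    (hly : ∀ x y y', c x y ≤ c x y' + dist y' y)
    (htX : ∀ x x' y, dist x x' ≤ c x y + c x' y)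
    (htY : ∀ x y y', dist y y' ≤ c x y + c x y')
    (hclose₁ : ∀ x, ∃ y, c x y ≤ half)
    (hclose₂ : ∀ y, ∃ x, c x y ≤ half)
    (ρ2 : ℝ≥0∞) (hρ2 : ENNReal.ofReal half < ρ2) :
    Nonempty (GHRealization X Y ρ2) := by
  letI M : MetricSpace (Glue X Y) :=
    { dist := fun p q => gdist c p q
      dist_self := gdist_self c
      dist_comm := gdist_comm c
      dist_triangle := gdist_triangle hlx hly htX htY
      eq_of_dist_eq_zero := fun {p q} h => gdist_eq_zero hhalf hge p q h }
  have hdX : ∀ x x' : X, dist (Glue.inX x : Glue X Y) (Glue.inX x') = dist x x' :=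
    fun _ _ => rfl
  have hdY : ∀ y y' : Y, dist (Glue.inY y : Glue X Y) (Glue.inY y') = dist y y' :=
    fun _ _ => rfl
  have hdc : ∀ (x : X) (y : Y), dist (Glue.inX x : Glue X Y) (Glue.inY y) = c x y :=
    fun _ _ => rfl
  have hinjX : Function.Injective (Glue.inX : X → Glue X Y) := fun a b h => by
    cases h; rfl
  have hinjY : Function.Injective (Glue.inY : Y → Glue X Y) := fun a b h => by
    cases h; rfl
  refine ⟨{ Z := Glue X Y, mZ := M,
            X' := Set.range (Glue.inX : X → Glue X Y),
            Y' := Set.range (Glue.inY : Y → Glue X Y),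
            isomX := ⟨{ toEquiv := Equiv.ofInjective _ hinjX,
                        isometry_toFun := Isometry.of_dist_eq fun a b => ?_ }⟩,
            isomY := ⟨{ toEquiv := Equiv.ofInjective _ hinjY,
                        isometry_toFun := Isometry.of_dist_eq fun a b => ?_ }⟩,
            hausdorff_lt := ?_ }⟩
  · exact hdX a b
  · exact hdY a b
  · refine lt_of_le_of_lt (EMetric.hausdorffEdist_le_of_mem_edist ?_ ?_) hρ2
    · rintro _ ⟨x, rfl⟩
      obtain ⟨y, hy⟩ := hclose₁ x
      refine ⟨Glue.inY y, Set.mem_range_self y, ?_⟩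
      rw [edist_dist, hdc]
      exact ENNReal.ofReal_le_ofReal hy
    · rintro _ ⟨y, rfl⟩
      obtain ⟨x, hx⟩ := hclose₂ y
      refine ⟨Glue.inX x, Set.mem_range_self x, ?_⟩
      rw [edist_dist, dist_comm, hdc]
      exact ENNReal.ofReal_le_ofReal hx
/-- The bridge cost summands. -/
noncomputable def bridgeT {X Y : Type} [MetricSpace X] [MetricSpace Y]
    (Φ : X → Y) (Ψ : Y → X) (half : ℝ) (x : X) (y : Y) : X ⊕ Y → ℝ
  | Sum.inl x₁ => dist x x₁ + half + dist (Φ x₁) y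
  | Sum.inr y₁ => dist x (Ψ y₁) + half + dist y₁ y

/-- From a pair of almost-isometric maps `Φ, Ψ` we obtain a GH realization. -/
lemma bridge_realization {X Y : Type} [MetricSpace X] [MetricSpace Y]
    [Nonempty X] [Nonempty Y]
    (Φ : X → Y) (Ψ : Y → X) (half : ℝ) (hhalf : 0 < half)
    (K1u : ∀ x x', dist (Φ x) (Φ x') ≤ dist x x' + 2*half)
    (K1l : ∀ x x', dist x x' ≤ dist (Φ x) (Φ x') + 2*half)
    (K2u : ∀ y y', dist (Ψ y) (Ψ y') ≤ dist y y' + 2*half)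
    (K2l : ∀ y y', dist y y' ≤ dist (Ψ y) (Ψ y') + 2*half)
    (K3a : ∀ x y, dist (Φ x) y ≤ dist x (Ψ y) + 2*half)
    (K3b : ∀ x y, dist x (Ψ y) ≤ dist (Φ x) y + 2*half)
    (ρ2 : ℝ≥0∞) (hρ2 : ENNReal.ofReal half < ρ2) :
    Nonempty (GHRealization X Y ρ2) := by
  classical
  haveI : Nonempty (X ⊕ Y) := ⟨Sum.inl (Classical.arbitrary X)⟩
  set T : X → Y → X ⊕ Y → ℝ := bridgeT Φ Ψ half with hT
  have hTnn : ∀ (x : X) (y : Y) (p : X ⊕ Y), half ≤ T x y p := by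
    rintro x y (x₁ | y₁)
    · have h1 : (0:ℝ) ≤ dist x x₁ := dist_nonneg
      have h2 : (0:ℝ) ≤ dist (Φ x₁) y := dist_nonneg
      show half ≤ dist x x₁ + half + dist (Φ x₁) y
      linarith
    · have h1 : (0:ℝ) ≤ dist x (Ψ y₁) := dist_nonneg
      have h2 : (0:ℝ) ≤ dist y₁ y := dist_nonneg
      show half ≤ dist x (Ψ y₁) + half + dist y₁ y
      linarith
  have hbd : ∀ (x : X) (y : Y), BddBelow (Set.range (T x y)) := by
    intro x y
    exact ⟨half, by rintro _ ⟨p, rfl⟩; exact hTnn x y p⟩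
  set c : X → Y → ℝ := fun x y => ⨅ p : X ⊕ Y, T x y p with hc
  have c_le : ∀ (x : X) (y : Y) (p : X ⊕ Y), c x y ≤ T x y p := fun x y p =>
    ciInf_le (hbd x y) p
  have hge : ∀ x y, half ≤ c x y := fun x y => le_ciInf (hTnn x y)
  have hlx : ∀ x x' y, c x y ≤ dist x x' + c x' y := by
    intro x x' y
    have h : c x y - dist x x' ≤ c x' y := by
      refine le_ciInf ?_
      rintro (x₁ | y₁)
      · have h1 : c x y ≤ dist x x₁ + half + dist (Φ x₁) y := c_le x y (Sum.inl x₁)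
        have h2 := dist_triangle x x' x₁
        show c x y - dist x x' ≤ dist x' x₁ + half + dist (Φ x₁) y
        linarith
      · have h1 : c x y ≤ dist x (Ψ y₁) + half + dist y₁ y := c_le x y (Sum.inr y₁)
        have h2 := dist_triangle x x' (Ψ y₁)
        show c x y - dist x x' ≤ dist x' (Ψ y₁) + half + dist y₁ y
        linarith
    linarith
  have hly : ∀ x y y', c x y ≤ c x y' + dist y' y := by
    intro x y y'
    have h : c x y - dist y' y ≤ c x y' := by
      refine le_ciInf ?_
      rintro (x₁ | y₁)
      · have h1 : c x y ≤ dist x x₁ + half + dist (Φ x₁) y := c_le x y (Sum.inl x₁)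
        have h2 := dist_triangle (Φ x₁) y' y
        show c x y - dist y' y ≤ dist x x₁ + half + dist (Φ x₁) y'
        linarith
      · have h1 : c x y ≤ dist x (Ψ y₁) + half + dist y₁ y := c_le x y (Sum.inr y₁)
        have h2 := dist_triangle y₁ y' y
        show c x y - dist y' y ≤ dist x (Ψ y₁) + half + dist y₁ y'
        linarith
    linarith
  have htX : ∀ x x' y, dist x x' ≤ c x y + c x' y := by
    intro x x' y
    have H : ∀ p q : X ⊕ Y, dist x x' ≤ T x y p + T x' y q := by
      rintro (x₁ | y₁) (x₂ | y₂)
      · show dist x x' ≤ (dist x x₁ + half + dist (Φ x₁) y) + (dist x' x₂ + half + dist (Φ x₂) y)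
        have h1 := K1l x₁ x₂
        have h2 := dist_triangle (Φ x₁) y (Φ x₂)
        have h3 := dist_comm y (Φ x₂)
        have h4 := dist_triangle4 x x₁ x₂ x'
        have h5 := dist_comm x₂ x'
        linarith
      · show dist x x' ≤ (dist x x₁ + half + dist (Φ x₁) y) + (dist x' (Ψ y₂) + half + dist y₂ y)
        have h1 := K3b x₁ y₂
        have h2 := dist_triangle (Φ x₁) y y₂
        have h3 := dist_comm y₂ y
        have h4 := dist_triangle4 x x₁ (Ψ y₂) x'
        have h5 := dist_comm (Ψ y₂) x'
        linarith
      · show dist x x' ≤ (dist x (Ψ y₁) + half + dist y₁ y) + (dist x' x₂ + half + dist (Φ x₂) y)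
        have h1 := K3b x₂ y₁
        have h2 := dist_triangle (Φ x₂) y y₁
        have h3 := dist_comm y₁ y
        have h4 := dist_triangle4 x (Ψ y₁) x₂ x'
        have h5 := dist_comm x₂ x'
        have h6 := dist_comm (Ψ y₁) x₂
        have h7 := dist_comm (Φ x₂) y
        linarith
      · show dist x x' ≤ (dist x (Ψ y₁) + half + dist y₁ y) + (dist x' (Ψ y₂) + half + dist y₂ y)
        have h1 := K2u y₁ y₂
        have h2 := dist_triangle y₁ y y₂
        have h3 := dist_comm y₂ y
        have h4 := dist_triangle4 x (Ψ y₁) (Ψ y₂) x'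
        have h5 := dist_comm (Ψ y₂) x'
        linarith
    have h1 : ∀ p, dist x x' - T x y p ≤ c x' y := fun p =>
      le_ciInf fun q => by linarith [H p q]
    have h2 : dist x x' - c x' y ≤ c x y := le_ciInf fun p => by linarith [h1 p]
    linarith
  have htY : ∀ x y y', dist y y' ≤ c x y + c x y' := by
    intro x y y'
    have H : ∀ p q : X ⊕ Y, dist y y' ≤ T x y p + T x y' q := by
      rintro (x₁ | y₁) (x₂ | y₂)
      · show dist y y' ≤ (dist x x₁ + half + dist (Φ x₁) y) + (dist x x₂ + half + dist (Φ x₂) y')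
        have h1 := K1u x₁ x₂
        have h2 := dist_triangle x₁ x x₂
        have h3 := dist_comm x x₁
        have h4 := dist_triangle4 y (Φ x₁) (Φ x₂) y'
        have h5 := dist_comm y (Φ x₁)
        have h6 := dist_comm (Φ x₂) y'
        linarith
      · show dist y y' ≤ (dist x x₁ + half + dist (Φ x₁) y) + (dist x (Ψ y₂) + half + dist y₂ y')
        have h1 := K3a x₁ y₂
        have h2 := dist_triangle x₁ x (Ψ y₂)
        have h3 := dist_comm x x₁
        have h4 := dist_triangle4 y (Φ x₁) y₂ y'
        have h5 := dist_comm y (Φ x₁)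
        linarith
      · show dist y y' ≤ (dist x (Ψ y₁) + half + dist y₁ y) + (dist x x₂ + half + dist (Φ x₂) y')
        have h1 := K3a x₂ y₁
        have h2 := dist_triangle x₂ x (Ψ y₁)
        have h3 := dist_comm x x₂
        have h4 := dist_triangle4 y y₁ (Φ x₂) y'
        have h5 := dist_comm y y₁
        have h6 := dist_comm y₁ (Φ x₂)
        linarith
      · show dist y y' ≤ (dist x (Ψ y₁) + half + dist y₁ y) + (dist x (Ψ y₂) + half + dist y₂ y')
        have h1 := K2l y₁ y₂
        have h2 := dist_triangle (Ψ y₁) x (Ψ y₂)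
        have h3 := dist_comm x (Ψ y₁)
        have h4 := dist_triangle4 y y₁ y₂ y'
        have h5 := dist_comm y y₁
        linarith
    have h1 : ∀ p, dist y y' - T x y p ≤ c x y' := fun p =>
      le_ciInf fun q => by linarith [H p q]
    have h2 : dist y y' - c x y' ≤ c x y := le_ciInf fun p => by linarith [h1 p]
    linarith
  have hclose₁ : ∀ x, ∃ y, c x y ≤ half := by
    intro x
    refine ⟨Φ x, ?_⟩
    have h := c_le x (Φ x) (Sum.inl x)
    have h2 : T x (Φ x) (Sum.inl x) = dist x x + half + dist (Φ x) (Φ x) := rfl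
    rw [h2, dist_self, dist_self] at h
    linarith
  have hclose₂ : ∀ y, ∃ x, c x y ≤ half := by
    intro y
    refine ⟨Ψ y, ?_⟩
    have h := c_le (Ψ y) y (Sum.inr y)
    have h2 : T (Ψ y) y (Sum.inr y) = dist (Ψ y) (Ψ y) + half + dist y y := rfl
    rw [h2, dist_self, dist_self] at h
    linarith
  exact realization_of_bridge c half hhalf hge hlx hly htX htY hclose₁ hclose₂ ρ2 hρ2
/-- Theorem 3.1: if `A` spans the injective metric space `X` and `B` spans the
injective metric space `Y`, then `d_GH(X,Y) ≤ 2 d_GH(A,B)`. -/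
theorem ghDist_le_two_ghDist_of_spans {X Y : Type} [MetricSpace X] [MetricSpace Y]
    (hX : IsInjectiveMS X) (hY : IsInjectiveMS Y)
    (A : Set X) (hA : Spans A) (B : Set Y) (hB : Spans B) :
    ghDist X Y ≤ 2 * ghDist A B := by
  classical
  have main : ∀ ρ : ℝ≥0∞, 0 < ρ → Nonempty (GHRealization ↥A ↥B ρ) → ghDist X Y ≤ 2 * ρ := by
    intro ρ hρ hR
    obtain ⟨R⟩ := hR
    letI := R.mZ
    obtain ⟨iA⟩ := R.isomX
    obtain ⟨iB⟩ := R.isomY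
    have h2ρpos : (0 : ℝ≥0∞) < 2 * ρ := ENNReal.mul_pos (by norm_num) hρ.ne'
    rcases isEmpty_or_nonempty X with hXe | hXn
    · haveI := hXe
      haveI hAe : IsEmpty ↥A := ⟨fun a => hXe.false (a : X)⟩
      haveI hX'e : IsEmpty ↥R.X' := Equiv.isEmpty iA.toEquiv.symm
      have hX' : R.X' = ∅ := Set.isEmpty_coe_sort.mp hX'e
      haveI hY'e : IsEmpty ↥R.Y' := by
        rw [Set.isEmpty_coe_sort]
        by_contra h
        have hne : R.Y'.Nonempty := Set.nonempty_iff_ne_empty.mpr h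
        have h2 := R.hausdorff_lt
        rw [hX', EMetric.hausdorffEdist, EMetric.hausdorffEdist_comm, EMetric.hausdorffEdist_empty hne] at h2
        exact not_top_lt h2
      haveI hBe : IsEmpty ↥B := Equiv.isEmpty iB.toEquiv
      haveI : IsEmpty Y := spans_isEmpty hB hBe
      exact ghDist_le_of_realization h2ρpos (ghRealization_of_isEmpty h2ρpos)
    rcases isEmpty_or_nonempty Y with hYe | hYn
    · haveI := hYe
      haveI hBe : IsEmpty ↥B := ⟨fun b => hYe.false (b : Y)⟩
      haveI hY'e : IsEmpty ↥R.Y' := Equiv.isEmpty iB.toEquiv.symm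
      have hY' : R.Y' = ∅ := Set.isEmpty_coe_sort.mp hY'e
      haveI hX'e : IsEmpty ↥R.X' := by
        rw [Set.isEmpty_coe_sort]
        by_contra h
        have hne : R.X'.Nonempty := Set.nonempty_iff_ne_empty.mpr h
        have h2 := R.hausdorff_lt
        rw [hY', EMetric.hausdorffEdist, EMetric.hausdorffEdist_empty hne] at h2
        exact not_top_lt h2
      haveI hAe : IsEmpty ↥A := Equiv.isEmpty iA.toEquiv
      haveI : IsEmpty X := spans_isEmpty hA hAe
      exact ghDist_le_of_realization h2ρpos (ghRealization_of_isEmpty h2ρpos)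
    -- both spaces nonempty
    haveI : Nonempty ↥A := spans_nonempty hA
    haveI : Nonempty ↥B := spans_nonempty hB
    obtain ⟨q, hq1, hq2⟩ := exists_between R.hausdorff_lt
    have hq0 : (0 : ℝ≥0∞) < q := lt_of_le_of_lt (zero_le) hq1
    have hqtop : q ≠ ⊤ := (lt_of_lt_of_le hq2 le_top).ne
    have h2q : 2 * q < 2 * ρ :=
      (ENNReal.mul_lt_mul_iff_right (by norm_num) (by norm_num)).mpr hq2
    obtain ⟨s, hs1, hs2⟩ := exists_between h2q
    have hstop : s ≠ ⊤ := (lt_of_lt_of_le hs2 le_top).ne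
    set rr : ℝ := q.toReal with hrrdef
    have hrr0 : 0 < rr := ENNReal.toReal_pos hq0.ne' hqtop
    set ε : ℝ := s.toReal - 2 * rr with hεdef
    have hε : 0 < ε := by
      have h := ENNReal.toReal_strict_mono hstop hs1
      rw [ENNReal.toReal_mul] at h
      have h2 : ((2 : ℝ≥0∞)).toReal = 2 := by norm_num
      rw [h2] at h
      simp only [hεdef]
      linarith
    have hofReal : ENNReal.ofReal (2 * rr + ε) < 2 * ρ := by
      have heq : 2 * rr + ε = s.toReal := by simp only [hεdef]; ring
      rw [heq, ENNReal.ofReal_toReal hstop]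
      exact hs2
    -- the matched pairs
    have hab : ∀ a : ↥A, ∃ b : ↥B, dist ((iA a : ↥R.X') : R.Z) ((iB b : ↥R.Y') : R.Z) < rr := by
      intro a
      have h1 : EMetric.infEdist ((iA a : ↥R.X') : R.Z) R.Y' < q :=
        lt_of_le_of_lt (EMetric.infEdist_le_hausdorffEdist_of_mem (iA a).2) hq1
      obtain ⟨z, hz, hzlt⟩ := EMetric.infEdist_lt_iff.mp h1
      refine ⟨iB.symm ⟨z, hz⟩, ?_⟩
      have h3 : ((iB (iB.symm ⟨z, hz⟩) : ↥R.Y') : R.Z) = z :=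
        congrArg Subtype.val (iB.apply_symm_apply ⟨z, hz⟩)
      rw [h3]
      rw [← ENNReal.ofReal_toReal hqtop] at hzlt
      exact edist_lt_ofReal.mp hzlt
    have hba : ∀ b : ↥B, ∃ a : ↥A, dist ((iB b : ↥R.Y') : R.Z) ((iA a : ↥R.X') : R.Z) < rr := by
      intro b
      have h0 : EMetric.hausdorffEdist R.Y' R.X' < q := by
        rw [EMetric.hausdorffEdist, EMetric.hausdorffEdist_comm]; exact hq1
      have h1 : EMetric.infEdist ((iB b : ↥R.Y') : R.Z) R.X' < q :=
        lt_of_le_of_lt (EMetric.infEdist_le_hausdorffEdist_of_mem (iB b).2) h0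
      obtain ⟨z, hz, hzlt⟩ := EMetric.infEdist_lt_iff.mp h1
      refine ⟨iA.symm ⟨z, hz⟩, ?_⟩
      have h3 : ((iA (iA.symm ⟨z, hz⟩) : ↥R.X') : R.Z) = z :=
        congrArg Subtype.val (iA.apply_symm_apply ⟨z, hz⟩)
      rw [h3]
      rw [← ENNReal.ofReal_toReal hqtop] at hzlt
      exact edist_lt_ofReal.mp hzlt
    have hi : Isometry (fun a : ↥A => ((iA a : ↥R.X') : R.Z)) :=
      isometry_subtype_coe.comp iA.isometry
    have hj : Isometry (fun b : ↥B => ((iB b : ↥R.Y') : R.Z)) :=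
      isometry_subtype_coe.comp iB.isometry
    have HΦ := fun x : X =>
      key_point hY hA (fun a : ↥A => ((iA a : ↥R.X') : R.Z))
        (fun b : ↥B => ((iB b : ↥R.Y') : R.Z)) hi hj rr ε hε hab x
    choose Φ hΦ using HΦ
    have HΨ := fun y : Y =>
      key_point hX hB (fun b : ↥B => ((iB b : ↥R.Y') : R.Z))
        (fun a : ↥A => ((iA a : ↥R.X') : R.Z)) hj hi rr ε hε hba y
    choose Ψ hΨ using HΨ
    -- the six almost-isometry facts
    have K1u : ∀ x x', dist (Φ x) (Φ x') ≤ dist x x' + (4 * rr + 2 * ε) := by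
      intro x x'
      refine (hB (Φ x) (Φ x')).2 ?_
      rintro z ⟨bel, hbel, rfl⟩
      obtain ⟨a, ha⟩ := hba ⟨bel, hbel⟩
      have ha' : dist ((iA a : ↥R.X') : R.Z) ((iB (⟨bel, hbel⟩ : ↥B) : ↥R.Y') : R.Z) < rr := by
        rw [dist_comm]; exact ha
      have h1 : dist (Φ x) bel ≤ dist x (a : X) + (rr + ε) := (hΦ x a ⟨bel, hbel⟩ ha').1
      have h2 : dist x' (a : X) - (3 * rr + ε) ≤ dist (Φ x') bel := (hΦ x' a ⟨bel, hbel⟩ ha').2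
      have h3 := dist_triangle x x' (a : X)
      show dist (Φ x) bel - dist (Φ x') bel ≤ dist x x' + (4 * rr + 2 * ε)
      linarith
    have K1l : ∀ x x', dist x x' ≤ dist (Φ x) (Φ x') + (4 * rr + 2 * ε) := by
      intro x x'
      refine (hA x x').2 ?_
      rintro z ⟨ael, hael, rfl⟩
      obtain ⟨b, hb⟩ := hab ⟨ael, hael⟩
      have h1 : dist x ael - (3 * rr + ε) ≤ dist (Φ x) (b : Y) := (hΦ x ⟨ael, hael⟩ b hb).2
      have h2 : dist (Φ x') (b : Y) ≤ dist x' ael + (rr + ε) := (hΦ x' ⟨ael, hael⟩ b hb).1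
      have h3 := dist_triangle (Φ x) (Φ x') (b : Y)
      show dist x ael - dist x' ael ≤ dist (Φ x) (Φ x') + (4 * rr + 2 * ε)
      linarith
    have K2u : ∀ y y', dist (Ψ y) (Ψ y') ≤ dist y y' + (4 * rr + 2 * ε) := by
      intro y y'
      refine (hA (Ψ y) (Ψ y')).2 ?_
      rintro z ⟨ael, hael, rfl⟩
      obtain ⟨b, hb⟩ := hab ⟨ael, hael⟩
      have hb' : dist ((iB b : ↥R.Y') : R.Z) ((iA (⟨ael, hael⟩ : ↥A) : ↥R.X') : R.Z) < rr := by
        rw [dist_comm]; exact hb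
      have h1 : dist (Ψ y) ael ≤ dist y (b : Y) + (rr + ε) := (hΨ y b ⟨ael, hael⟩ hb').1
      have h2 : dist y' (b : Y) - (3 * rr + ε) ≤ dist (Ψ y') ael := (hΨ y' b ⟨ael, hael⟩ hb').2
      have h3 := dist_triangle y y' (b : Y)
      show dist (Ψ y) ael - dist (Ψ y') ael ≤ dist y y' + (4 * rr + 2 * ε)
      linarith
    have K2l : ∀ y y', dist y y' ≤ dist (Ψ y) (Ψ y') + (4 * rr + 2 * ε) := by
      intro y y'
      refine (hB y y').2 ?_
      rintro z ⟨bel, hbel, rfl⟩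
      obtain ⟨a, ha⟩ := hba ⟨bel, hbel⟩
      have h1 : dist y bel - (3 * rr + ε) ≤ dist (Ψ y) (a : X) := (hΨ y ⟨bel, hbel⟩ a ha).2
      have h2 : dist (Ψ y') (a : X) ≤ dist y' bel + (rr + ε) := (hΨ y' ⟨bel, hbel⟩ a ha).1
      have h3 := dist_triangle (Ψ y) (Ψ y') (a : X)
      show dist y bel - dist y' bel ≤ dist (Ψ y) (Ψ y') + (4 * rr + 2 * ε)
      linarith
    have K3a : ∀ x y, dist (Φ x) y ≤ dist x (Ψ y) + (4 * rr + 2 * ε) := by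
      intro x y
      refine (hB (Φ x) y).2 ?_
      rintro z ⟨bel, hbel, rfl⟩
      obtain ⟨a, ha⟩ := hba ⟨bel, hbel⟩
      have ha' : dist ((iA a : ↥R.X') : R.Z) ((iB (⟨bel, hbel⟩ : ↥B) : ↥R.Y') : R.Z) < rr := by
        rw [dist_comm]; exact ha
      have h1 : dist (Φ x) bel ≤ dist x (a : X) + (rr + ε) := (hΦ x a ⟨bel, hbel⟩ ha').1
      have h2 : dist (Ψ y) (a : X) ≤ dist y bel + (rr + ε) := (hΨ y ⟨bel, hbel⟩ a ha).1
      have h3 := dist_triangle x (Ψ y) (a : X)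
      show dist (Φ x) bel - dist y bel ≤ dist x (Ψ y) + (4 * rr + 2 * ε)
      linarith
    have K3b : ∀ x y, dist x (Ψ y) ≤ dist (Φ x) y + (4 * rr + 2 * ε) := by
      intro x y
      have h : dist (Ψ y) x ≤ dist (Φ x) y + (4 * rr + 2 * ε) := by
        refine (hA (Ψ y) x).2 ?_
        rintro z ⟨ael, hael, rfl⟩
        obtain ⟨b, hb⟩ := hab ⟨ael, hael⟩
        have hb' : dist ((iB b : ↥R.Y') : R.Z) ((iA (⟨ael, hael⟩ : ↥A) : ↥R.X') : R.Z) < rr := by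
          rw [dist_comm]; exact hb
        have h1 : dist (Ψ y) ael ≤ dist y (b : Y) + (rr + ε) := (hΨ y b ⟨ael, hael⟩ hb').1
        have h2 : dist (Φ x) (b : Y) ≤ dist x ael + (rr + ε) := (hΦ x ⟨ael, hael⟩ b hb).1
        have h3 := dist_triangle y (Φ x) (b : Y)
        have h4 := dist_comm y (Φ x)
        show dist (Ψ y) ael - dist x ael ≤ dist (Φ x) y + (4 * rr + 2 * ε)
        linarith
      rw [dist_comm]
      exact h
    -- assemble
    have hreal := bridge_realization Φ Ψ (2 * rr + ε) (by linarith)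
      (fun x x' => by linarith [K1u x x'])
      (fun x x' => by linarith [K1l x x'])
      (fun y y' => by linarith [K2u y y'])
      (fun y y' => by linarith [K2l y y'])
      (fun x y => by linarith [K3a x y])
      (fun x y => by linarith [K3b x y])
      (2 * ρ) hofReal
    exact ghDist_le_of_realization h2ρpos hreal
  by_cases htop : ghDist ↥A ↥B = ⊤
  · rw [htop]
    have h2 : (2 : ℝ≥0∞) * ⊤ = ⊤ := by simp
    rw [h2]
    exact le_top
  · refine ENNReal.le_of_forall_pos_le_add fun δ hδ _ => ?_
    have hδ2 : ((δ : ℝ≥0∞) / 2) ≠ 0 := by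
      simp [ENNReal.div_eq_zero_iff, hδ.ne']
    have hlt : ghDist ↥A ↥B < ghDist ↥A ↥B + (δ : ℝ≥0∞) / 2 :=
      ENNReal.lt_add_right htop hδ2
    obtain ⟨ρ, hρlt⟩ := iInf_lt_iff.mp
      (show (⨅ (ρ : ℝ≥0∞) (_ : 0 < ρ ∧ Nonempty (GHRealization ↥A ↥B ρ)), ρ) <
        ghDist ↥A ↥B + (δ : ℝ≥0∞) / 2 from hlt)
    by_cases hP : 0 < ρ ∧ Nonempty (GHRealization ↥A ↥B ρ)
    · rw [iInf_pos hP] at hρlt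
      calc ghDist X Y ≤ 2 * ρ := main ρ hP.1 hP.2
        _ ≤ 2 * (ghDist ↥A ↥B + (δ : ℝ≥0∞) / 2) := mul_le_mul_right hρlt.le 2
        _ = 2 * ghDist ↥A ↥B + 2 * ((δ : ℝ≥0∞) / 2) := by rw [mul_add]
        _ = 2 * ghDist ↥A ↥B + (δ : ℝ≥0∞) := by
            rw [ENNReal.mul_div_cancel' (by norm_num) (by norm_num)]
    · rw [iInf_neg hP] at hρlt
      exact absurd hρlt not_top_lt
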